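/- For every r > 0 and every natural number k, the function w ↦ |w| · (log₊(|w|/r))^k is convex on ℝ³. -/

import Mathlib

open Set Real Filter

private lemma lpos_zero (r : ℝ) (hr : 0 < r) {s : ℝ} (h0 : 0 ≤ s) (h1 : s ≤ r) :
    max (Real.log (s / r)) 0 = 0 :=
  max_eq_right (Real.log_nonpos (by positivity) (by rw [div_le_one hr]; exact h1))

private lemma lpos_mono (r : ℝ) (hr : 0 < r) :
    MonotoneOn (fun t : ℝ => max (Real.log (t / r)) 0) (Set.Ici 0) := by
  intro a ha b hb hab
  simp only
  apply max_le _ (le_max_right _ _)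
  rcases eq_or_lt_of_le (mem_Ici.mp ha) with h0 | h0
  · simp [← h0]
  · have hb0 : (0:ℝ) < b := lt_of_lt_of_le h0 hab
    refine le_max_of_le_left ?_
    rw [Real.log_le_log_iff (by positivity) (by positivity)]
    gcongr

private lemma g_mono (r : ℝ) (hr : 0 < r) (k : ℕ) :
    MonotoneOn (fun t : ℝ => t * max (Real.log (t / r)) 0 ^ k) (Set.Ici 0) := by
  intro a ha b hb hab
  have h1 := lpos_mono r hr ha hb hab
  have h2 : (0:ℝ) ≤ max (Real.log (a / r)) 0 := le_max_right _ _
  exact mul_le_mul hab (pow_le_pow_left₀ h2 h1 k) (pow_nonneg h2 k) hb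

private lemma key1 (r : ℝ) (hr : 0 < r) :
    ConvexOn ℝ (Set.Ici 0) (fun t : ℝ => t * max (Real.log (t / r)) 0) := by
  have hlin : ConcaveOn ℝ (Set.Ici (0:ℝ)) (fun t : ℝ => Real.log r * t) := by
    refine ⟨convex_Ici 0, fun x _ y _ a b _ _ _ => le_of_eq ?_⟩
    simp only [smul_eq_mul]; ring
  have h1 : ConvexOn ℝ (Set.Ici (0:ℝ))
      ((fun t : ℝ => t * Real.log t) - fun t : ℝ => Real.log r * t) :=
    Real.convexOn_mul_log.sub hlin
  have h2 := h1.sup (convexOn_const (0:ℝ) (convex_Ici 0))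
  refine h2.congr fun t ht => ?_
  simp only [Pi.sup_apply, Pi.sub_apply]
  rcases eq_or_lt_of_le (mem_Ici.mp ht) with h0 | h0
  · simp [← h0]
  · rw [Real.log_div h0.ne' hr.ne']
    rw [show t * Real.log t - Real.log r * t = t * (Real.log t - Real.log r) by ring]
    rw [show (0:ℝ) = t * 0 by ring, ← mul_max_of_nonneg _ _ h0.le]
    simp

private lemma smooth_deriv (r : ℝ) (hr : 0 < r) (m : ℕ) {t : ℝ} (ht : 0 < t) :
    HasDerivAt (fun s : ℝ => s * Real.log (s / r) ^ (m + 2))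
      (Real.log (t / r) ^ (m + 2) + (m + 2) * Real.log (t / r) ^ (m + 1)) t := by
  have hlog : HasDerivAt (fun s : ℝ => Real.log (s / r)) (1 / t) t := by
    have h1 : HasDerivAt (fun s : ℝ => s / r) (1 / r) t := by
      simpa using (hasDerivAt_id t).div_const r
    have h2 := (Real.hasDerivAt_log (div_ne_zero ht.ne' hr.ne')).comp t h1
    refine h2.congr_deriv ?_
    field_simp
  have hpow := hlog.pow (m + 2)
  have hmul := (hasDerivAt_id t).mul hpow
  refine hmul.congr_deriv ?_
  field_simp
  simp only [Pi.pow_apply, id_eq, Nat.cast_add, Nat.cast_ofNat, show m + 2 - 1 = m + 1 from rfl]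
  ring

private lemma hasDeriv_g (r : ℝ) (hr : 0 < r) (m : ℕ) {t : ℝ} (ht : 0 < t) :
    HasDerivAt (fun s : ℝ => s * max (Real.log (s / r)) 0 ^ (m + 2))
      (max (Real.log (t / r)) 0 ^ (m + 2) + (m + 2) * max (Real.log (t / r)) 0 ^ (m + 1)) t := by
  rcases lt_trichotomy t r with hlt | heq | hgt
  · -- t < r : the function vanishes near t
    have hz : max (Real.log (t / r)) 0 = 0 := lpos_zero r hr ht.le hlt.le
    rw [hz]
    have h0 : HasDerivAt (fun _ : ℝ => (0:ℝ)) 0 t := hasDerivAt_const t 0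
    have hev : (fun s : ℝ => s * max (Real.log (s / r)) 0 ^ (m + 2)) =ᶠ[nhds t]
        fun _ : ℝ => (0:ℝ) := by
      filter_upwards [isOpen_Ioo.mem_nhds (show t ∈ Ioo 0 r from ⟨ht, hlt⟩)] with s hs
      rw [lpos_zero r hr hs.1.le hs.2.le]
      simp
    have := h0.congr_of_eventuallyEq hev
    refine this.congr_deriv ?_
    simp
  · -- t = r
    subst heq
    have hz : max (Real.log (t / t)) 0 = 0 := lpos_zero t ht ht.le le_rfl
    rw [hz]
    have hval : (0:ℝ) ^ (m + 2) + ((m:ℝ) + 2) * 0 ^ (m + 1) = 0 := by simp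
    rw [hval]
    have hleft : HasDerivWithinAt (fun s : ℝ => s * max (Real.log (s / t)) 0 ^ (m + 2))
        0 (Iic t) t := by
      refine (hasDerivWithinAt_const t (Iic t) 0).congr_of_eventuallyEq ?_ ?_
      · have hmem : Ioi (0:ℝ) ∈ nhdsWithin t (Iic t) :=
          mem_nhdsWithin_of_mem_nhds (isOpen_Ioi.mem_nhds ht)
        filter_upwards [hmem, self_mem_nhdsWithin] with s hs1 hs2
        rw [lpos_zero t ht (le_of_lt hs1) hs2]
        simp
      · rw [lpos_zero t ht ht.le le_rfl]; simp
    have hright : HasDerivWithinAt (fun s : ℝ => s * max (Real.log (s / t)) 0 ^ (m + 2))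
        0 (Ici t) t := by
      have hs := smooth_deriv t ht m ht
      rw [div_self ht.ne', Real.log_one] at hs
      simp only [zero_pow (Nat.succ_ne_zero _), mul_zero, add_zero] at hs
      refine (hs.hasDerivWithinAt).congr_of_eventuallyEq ?_ ?_
      · filter_upwards [self_mem_nhdsWithin] with s hs2
        rw [max_eq_left (Real.log_nonneg (by rw [le_div_iff₀ ht]; linarith [mem_Ici.mp hs2]))]
      · rw [max_eq_left (by rw [div_self ht.ne', Real.log_one])]
    have := hleft.union hright
    rw [Iic_union_Ici, hasDerivWithinAt_univ] at this
    exact this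
  · -- t > r
    have hnn : 0 ≤ Real.log (t / r) := Real.log_nonneg (by rw [le_div_iff₀ hr]; linarith)
    rw [max_eq_left hnn]
    have hev : (fun s : ℝ => s * max (Real.log (s / r)) 0 ^ (m + 2)) =ᶠ[nhds t]
        fun s : ℝ => s * Real.log (s / r) ^ (m + 2) := by
      filter_upwards [isOpen_Ioi.mem_nhds (show t ∈ Ioi r from hgt)] with s hs
      rw [max_eq_left (Real.log_nonneg (by rw [le_div_iff₀ hr]; linarith [mem_Ioi.mp hs]))]
    exact (smooth_deriv r hr m (hr.trans hgt)).congr_of_eventuallyEq hev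

private lemma key2 (r : ℝ) (hr : 0 < r) (m : ℕ) :
    ConvexOn ℝ (Set.Ici 0) (fun t : ℝ => t * max (Real.log (t / r)) 0 ^ (m + 2)) := by
  refine MonotoneOn.convexOn_of_deriv (convex_Ici 0) ?_ ?_ ?_
  · -- continuity
    intro t ht
    rcases eq_or_lt_of_le (mem_Ici.mp ht) with h0 | h0
    · refine (continuousWithinAt_const (b := (0:ℝ))).congr_of_eventuallyEq ?_ ?_
      · have hmem : Iio r ∈ nhdsWithin t (Ici 0) :=
          mem_nhdsWithin_of_mem_nhds (isOpen_Iio.mem_nhds (by rw [← h0]; exact hr))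
        filter_upwards [hmem, self_mem_nhdsWithin] with s hs1 hs2
        rw [lpos_zero r hr hs2 (le_of_lt hs1)]
        simp
      · rw [lpos_zero r hr ht (by rw [← h0]; exact hr.le)]
        simp
    · exact (hasDeriv_g r hr m h0).continuousAt.continuousWithinAt
  · -- differentiability on interior
    rw [interior_Ici]
    intro t ht
    exact (hasDeriv_g r hr m ht).differentiableAt.differentiableWithinAt
  · -- monotone derivative
    rw [interior_Ici]
    intro a ha b hb hab
    rw [(hasDeriv_g r hr m ha).deriv, (hasDeriv_g r hr m hb).deriv]
    have h1 := lpos_mono r hr (mem_Ici.mpr (mem_Ioi.mp ha).le) (mem_Ici.mpr (mem_Ioi.mp hb).le) hab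
    have h2 : (0:ℝ) ≤ max (Real.log (a / r)) 0 := le_max_right _ _
    exact add_le_add (pow_le_pow_left₀ h2 h1 _)
      (mul_le_mul_of_nonneg_left (pow_le_pow_left₀ h2 h1 _) (by positivity))

private lemma key (r : ℝ) (hr : 0 < r) (k : ℕ) :
    ConvexOn ℝ (Set.Ici 0) (fun t : ℝ => t * max (Real.log (t / r)) 0 ^ k) := by
  match k with
  | 0 =>
    refine (convexOn_id (convex_Ici (0:ℝ))).congr fun t ht => ?_
    simp
  | 1 =>
    refine (key1 r hr).congr fun t ht => ?_
    simp
  | (m + 2) => exact key2 r hr m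

/-- Convexity of `w ↦ |w| log₊ᵏ(|w|/r)` on ℝ³. -/
theorem stmt_14 (r : ℝ) (hr : 0 < r) (k : ℕ) :
    ConvexOn ℝ Set.univ
      (fun w : EuclideanSpace ℝ (Fin 3) =>
        ‖w‖ * (max (Real.log (‖w‖ / r)) 0) ^ k) := by
  have himg : (fun w : EuclideanSpace ℝ (Fin 3) => ‖w‖) '' Set.univ = Set.Ici 0 := by
    ext y
    constructor
    · rintro ⟨w, -, rfl⟩; exact norm_nonneg w
    · intro hy
      exact ⟨EuclideanSpace.single 0 y, Set.mem_univ _, by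
        simp [EuclideanSpace.norm_single, abs_of_nonneg (mem_Ici.mp hy)]⟩
  have hg : ConvexOn ℝ ((fun w : EuclideanSpace ℝ (Fin 3) => ‖w‖) '' Set.univ)
      (fun t : ℝ => t * max (Real.log (t / r)) 0 ^ k) := by
    rw [himg]; exact key r hr k
  have hmono : MonotoneOn (fun t : ℝ => t * max (Real.log (t / r)) 0 ^ k)
      ((fun w : EuclideanSpace ℝ (Fin 3) => ‖w‖) '' Set.univ) := by
    rw [himg]; exact g_mono r hr k
  exact hg.comp convexOn_univ_norm hmono
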